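/- Let M be a square complex matrix whose first row and first column are entirely zero, let a, b be real numbers with a ≠ 0 and b ≠ 0, and let J denote the all-ones matrix of the same size. Then rank(aM + bJ) = rank(M) + 1. -/

import Mathlib

open Matrix Submodule Module

theorem stmt11 (n : ℕ) (M : Matrix (Fin (n + 1)) (Fin (n + 1)) ℂ)
    (hrow : ∀ j, M 0 j = 0) (hcol : ∀ i, M i 0 = 0)
    (a b : ℝ) (ha : a ≠ 0) (hb : b ≠ 0) :
    ((a : ℂ) • M + (b : ℂ) • Matrix.of (fun _ _ => (1 : ℂ))).rank = M.rank + 1 := by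
  have ha' : (a : ℂ) ≠ 0 := Complex.ofReal_ne_zero.mpr ha
  have hb' : (b : ℂ) ≠ 0 := Complex.ofReal_ne_zero.mpr hb
  set N := ((a : ℂ) • M + (b : ℂ) • Matrix.of (fun _ _ => (1 : ℂ))) with hN
  set one : Fin (n+1) → ℂ := fun _ => 1 with hone
  have hcolN : ∀ i, Nᵀ i = (a:ℂ) • Mᵀ i + (b:ℂ) • one := by
    intro i; funext j; simp [hN, Matrix.transpose_apply, hone]
  have hM0 : Mᵀ 0 = 0 := by funext j; simp [Matrix.transpose_apply, hcol j]
  have hone_mem : one ∈ span ℂ (Set.range Nᵀ) := by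
    have h1 : Nᵀ 0 = (b:ℂ) • one := by rw [hcolN 0, hM0]; simp
    have h2 : one = (b:ℂ)⁻¹ • Nᵀ 0 := by
      rw [h1, smul_smul, inv_mul_cancel₀ hb', one_smul]
    rw [h2]
    exact Submodule.smul_mem _ _ (subset_span ⟨0, rfl⟩)
  have hspan : span ℂ (Set.range Nᵀ) = span ℂ (Set.range Mᵀ) ⊔ span ℂ {one} := by
    apply le_antisymm
    · rw [span_le]
      rintro _ ⟨i, rfl⟩
      rw [hcolN i]
      exact add_mem
        (Submodule.smul_mem _ _ (Submodule.mem_sup_left (subset_span ⟨i, rfl⟩)))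
        (Submodule.smul_mem _ _ (Submodule.mem_sup_right (subset_span rfl)))
    · rw [sup_le_iff]
      constructor
      · rw [span_le]
        rintro _ ⟨i, rfl⟩
        have h3 : Mᵀ i = (a:ℂ)⁻¹ • (Nᵀ i - (b:ℂ) • one) := by
          rw [hcolN i, add_sub_cancel_right, smul_smul, inv_mul_cancel₀ ha', one_smul]
        rw [h3]
        exact Submodule.smul_mem _ _
          (sub_mem (subset_span ⟨i, rfl⟩) (Submodule.smul_mem _ _ hone_mem))
      · rw [span_le, Set.singleton_subset_iff]
        exact hone_mem
  have hone_ne : one ≠ 0 := by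
    intro h
    have := congrFun h 0
    simp [hone] at this
  have hnotmem : one ∉ span ℂ (Set.range Mᵀ) := by
    intro h
    have hle : span ℂ (Set.range Mᵀ) ≤
        LinearMap.ker (LinearMap.proj (R := ℂ) (φ := fun _ : Fin (n+1) => ℂ) 0) := by
      rw [span_le]
      rintro _ ⟨i, rfl⟩
      simp [LinearMap.mem_ker, Matrix.transpose_apply, hrow]
    have := hle h
    simp [LinearMap.mem_ker, hone] at this
  have hinf : span ℂ (Set.range Mᵀ) ⊓ span ℂ {one} = ⊥ := by
    rw [eq_bot_iff]
    intro x hx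
    rw [Submodule.mem_inf] at hx
    obtain ⟨hx1, hx2⟩ := hx
    rw [Submodule.mem_span_singleton] at hx2
    obtain ⟨c, rfl⟩ := hx2
    rcases eq_or_ne c 0 with rfl | hc
    · simp
    · exfalso
      apply hnotmem
      have := (span ℂ (Set.range Mᵀ)).smul_mem c⁻¹ hx1
      rwa [smul_smul, inv_mul_cancel₀ hc, one_smul] at this
  rw [Matrix.rank_eq_finrank_span_cols, Matrix.rank_eq_finrank_span_cols]
  change finrank ℂ (span ℂ (Set.range Nᵀ)) = finrank ℂ (span ℂ (Set.range Mᵀ)) + 1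
  rw [hspan]
  have hkey := Submodule.finrank_sup_add_finrank_inf_eq (span ℂ (Set.range Mᵀ)) (span ℂ {one})
  rw [hinf, finrank_bot, finrank_span_singleton hone_ne] at hkey
  omega
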